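/- Suppose {A_ξ : ξ < κ} is an almost disjoint family of infinite subsets of ℕ, F ⊆ κ is countable, and S : ℓ∞^c(κ) → C(ℕ*) is an isometric embedding with S(1_{{ξ}}) = 1_{[A_ξ]} for all ξ < κ. Then for every ξ ∈ F, the clopen set [A_ξ] ⊆ ℕ* is contained in {x ∈ ℕ* : S(1_F)(x) = 1}, and for every ξ ∉ F, [A_ξ] is disjoint from {x ∈ ℕ* : S(1_F)(x) > 0}. -/

import Mathlib

set_option synthInstance.maxHeartbeats 400000
set_option maxHeartbeats 1000000

noncomputable section

open Set Filter
open scoped ENNReal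

/-- `ℓ∞(κ)`: bounded real-valued functions on `κ` with the sup norm. -/
abbrev LinfK (κ : Type*) : Type _ := ↥(lp (fun _ : κ => ℝ) ∞)

/-- `ℓ∞^c(κ)`: the subspace of `ℓ∞(κ)` of countably supported functions. -/
def linfc (κ : Type*) : Submodule ℝ (LinfK κ) where
  carrier := {f | (Function.support (⇑f)).Countable}
  add_mem' := by
    intro f g hf hg
    refine Set.Countable.mono ?_ (hf.union hg)
    rw [lp.coeFn_add]
    exact Function.support_add _ _
  zero_mem' := by
    simp [Function.support, lp.coeFn_zero]
  smul_mem' := by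
    intro c f hf
    refine Set.Countable.mono ?_ hf
    rw [lp.coeFn_smul]
    exact Function.support_const_smul_subset c _

/-- The indicator function `1_F` of a countable `F ⊆ κ`, as an element of `ℓ∞^c(κ)`. -/
def indLinfc {κ : Type*} (F : Set κ) (hF : F.Countable) : ↥(linfc κ) :=
  ⟨⟨F.indicator (fun _ => (1 : ℝ)), memℓp_infty ⟨1, by
      rintro x ⟨i, rfl⟩
      by_cases h : i ∈ F
      · simp [Set.indicator_of_mem h]
      · simp [Set.indicator_of_notMem h]⟩⟩,
    Set.Countable.mono (Set.support_indicator_subset) hF⟩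

/-- The unit vector `1_{{ξ}}` of `ℓ∞^c(κ)`. -/
def unitVecC {κ : Type*} (ξ : κ) : ↥(linfc κ) :=
  indLinfc ({ξ} : Set κ) (Set.countable_singleton ξ)

/-- `ℕ* = βℕ \ ℕ`: the space of nonprincipal ultrafilters on `ℕ`. -/
def NStar : Type := {u : Ultrafilter ℕ // ∀ n : ℕ, u ≠ (pure n : Ultrafilter ℕ)}

instance : TopologicalSpace NStar := instTopologicalSpaceSubtype

/-- The clopen subset `[A] ⊆ ℕ*` determined by `A ⊆ ℕ`. -/
def clopenOf (A : Set ℕ) : Set NStar := {u : NStar | A ∈ u.1}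

theorem isClopen_clopenOf (A : Set ℕ) : IsClopen (clopenOf A) :=
  ⟨(ultrafilter_isClosed_basic A).preimage continuous_subtype_val,
   (ultrafilter_isOpen_basic A).preimage continuous_subtype_val⟩

/-- The characteristic function `1_{[A]} ∈ C(ℕ*)`. -/
def indBCF (A : Set ℕ) : BoundedContinuousFunction NStar ℝ :=
  BoundedContinuousFunction.indicator (clopenOf A) (isClopen_clopenOf A)

/-- with `S` and `{A_ξ}` as above and `F ⊆ κ` countable, for `ξ ∈ F` the
clopen set `[A_ξ]` is contained in `{x : S(1_F)(x) = 1}`, and for `ξ ∉ F` it is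
disjoint from `{x : S(1_F)(x) > 0}`. -/
theorem stmt6 {κ : Type*} (A : κ → Set ℕ) (hinj : Function.Injective A)
    (hAinf : ∀ ξ, (A ξ).Infinite)
    (hAD : ∀ ξ η, ξ ≠ η → (A ξ ∩ A η).Finite)
    (F : Set κ) (hF : F.Countable)
    (S : ↥(linfc κ) →ₗᵢ[ℝ] BoundedContinuousFunction NStar ℝ)
    (hS : ∀ ξ, S (unitVecC ξ) = indBCF (A ξ)) :
    (∀ ξ ∈ F, ∀ x : NStar, x ∈ clopenOf (A ξ) → S (indLinfc F hF) x = 1) ∧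
    (∀ ξ ∉ F, ∀ x : NStar, x ∈ clopenOf (A ξ) → ¬ (0 < S (indLinfc F hF) x)) := by

  classical
  set f := indLinfc F hF with hf
  -- key bound: pointwise values of S h are bounded by sup of coordinates of h
  have key : ∀ (h : ↥(linfc κ)) (C : ℝ), 0 ≤ C →
      (∀ i, |((h : LinfK κ) : κ → ℝ) i| ≤ C) → ∀ x : NStar, |S h x| ≤ C := by
    intro h C hC hcoord x
    have h1 : |S h x| ≤ ‖S h‖ := by
      simpa using (S h).norm_coe_le_norm x
    have h2 : ‖S h‖ = ‖h‖ := S.norm_map h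
    have h3 : ‖h‖ ≤ C := by
      have : ‖(h : LinfK κ)‖ ≤ C := lp.norm_le_of_forall_le hC (fun i => by
        simpa [Real.norm_eq_abs] using hcoord i)
      simpa using this
    linarith
  have fcoord : ∀ i, ((f : LinfK κ) : κ → ℝ) i = F.indicator (fun _ => (1:ℝ)) i := by
    intro i; rfl
  have ecoord : ∀ ξ i, ((unitVecC ξ : ↥(linfc κ)) : LinfK κ) i
      = ({ξ} : Set κ).indicator (fun _ => (1:ℝ)) i := by
    intro ξ i; rfl
  have indval : ∀ (ξ : κ) (x : NStar), x ∈ clopenOf (A ξ) → indBCF (A ξ) x = 1 := by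
    intro ξ x hx
    show (clopenOf (A ξ)).indicator 1 x = 1
    exact Set.indicator_of_mem hx 1
  constructor
  · intro ξ hξ x hx
    -- upper bound: ‖f‖ ≤ 1 gives S f x ≤ 1
    have hub : |S f x| ≤ 1 := by
      refine key f 1 zero_le_one (fun i => ?_) x
      rw [fcoord]
      by_cases hi : i ∈ F <;> simp [Set.indicator_apply, hi]
    -- lower bound via f - 2 • unitVecC ξ
    have hlb : |S f x - 2| ≤ 1 := by
      have hc : ∀ i, |((f - (2:ℝ) • unitVecC ξ : ↥(linfc κ)) : LinfK κ) i| ≤ 1 := by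
        intro i
        have : ((f - (2:ℝ) • unitVecC ξ : ↥(linfc κ)) : LinfK κ) i
            = F.indicator (fun _ => (1:ℝ)) i
              - 2 * ({ξ} : Set κ).indicator (fun _ => (1:ℝ)) i := rfl
        rw [this]
        rcases eq_or_ne i ξ with rfl | hne
        · rw [Set.indicator_of_mem hξ, Set.indicator_of_mem (Set.mem_singleton i)]
          norm_num
        · rw [Set.indicator_of_notMem
            (show i ∉ ({ξ} : Set κ) from fun h => hne (Set.mem_singleton_iff.mp h))]
          by_cases hi : i ∈ F
          · rw [Set.indicator_of_mem hi]; norm_num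
          · rw [Set.indicator_of_notMem hi]; norm_num
      have := key (f - (2:ℝ) • unitVecC ξ) 1 zero_le_one hc x
      have hval : S (f - (2:ℝ) • unitVecC ξ) x = S f x - 2 := by
        rw [map_sub, map_smul]
        have : (S (unitVecC ξ)) x = 1 := by rw [hS]; exact indval ξ x hx
        simp [this]
      rw [hval] at this
      exact this
    have h1 := abs_le.1 hub
    have h2 := abs_le.1 hlb
    linarith [h1.2, h2.1]
  · intro ξ hξ x hx
    have hub : |S f x + 1| ≤ 1 := by
      have hc : ∀ i, |((f + unitVecC ξ : ↥(linfc κ)) : LinfK κ) i| ≤ 1 := by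
        intro i
        have : ((f + unitVecC ξ : ↥(linfc κ)) : LinfK κ) i
            = F.indicator (fun _ => (1:ℝ)) i
              + ({ξ} : Set κ).indicator (fun _ => (1:ℝ)) i := rfl
        rw [this]
        rcases eq_or_ne i ξ with rfl | hne
        · rw [Set.indicator_of_notMem hξ, Set.indicator_of_mem (Set.mem_singleton i)]
          norm_num
        · rw [Set.indicator_of_notMem
            (show i ∉ ({ξ} : Set κ) from fun h => hne (Set.mem_singleton_iff.mp h))]
          by_cases hi : i ∈ F
          · rw [Set.indicator_of_mem hi]; norm_num
          · rw [Set.indicator_of_notMem hi]; norm_num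
      have := key (f + unitVecC ξ) 1 zero_le_one hc x
      have hval : S (f + unitVecC ξ) x = S f x + 1 := by
        rw [map_add]
        have : (S (unitVecC ξ)) x = 1 := by rw [hS]; exact indval ξ x hx
        simp [this]
      rw [hval] at this
      exact this
    have h2 := (abs_le.1 hub).2
    intro hpos
    linarith
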